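/- Let F be a field, S a linear recurring sequence over F whose ideal of characteristic polynomials is Id_S = g_1·F[x] with g_1 monic, and let g_2 be defined by x g_2 = [g_1·S̄]. Let n ≥ 2·deg g_1 and s = S|n. Then (g_1, g_2) is a minimal solution for s, and every minimal solution for s equals c·(g_1, g_2) for some c ∈ F^×. Moreover S̄ = x g_2 / g_1, so S is determined by its first 2·deg g_1 terms. -/

import Mathlib

open Polynomial HahnSeries in
/-- Polynomial part of a Laurent series in `x⁻¹` (the series variable is `x⁻¹`,
so the coefficient of `xᵏ` is the coefficient at exponent `-k`). -/
noncomputable def polPart {F : Type*} [Field F] (L : LaurentSeries F) : Polynomial F :=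
  ∑ k ∈ Finset.range ((-L.order).toNat + 1), Polynomial.C (L.coeff (-(k : ℤ))) * Polynomial.X ^ k

/-- Embedding of polynomials in `x` into Laurent series in `x⁻¹`. -/
noncomputable def toL {F : Type*} [Field F] (p : Polynomial F) : LaurentSeries F :=
  ∑ k ∈ Finset.range (p.natDegree + 1), HahnSeries.single (-(k : ℤ)) (p.coeff k)

/-- Generating function `S̄ = Σ_{i ≤ 0} S_i xⁱ` of an infinite sequence
(`S k` denotes `S₋ₖ`), as a Laurent series in `x⁻¹`. -/
noncomputable def sbar {F : Type*} [Field F] (S : ℕ → F) : LaurentSeries F :=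
  HahnSeries.ofPowerSeries ℤ F (PowerSeries.mk S)

/-- The remainders `b_i` of the continued-fraction algorithm for `S̄` (junk `0` after it stops). -/
noncomputable def cfB {F : Type*} [Field F] (S : ℕ → F) : ℕ → LaurentSeries F
  | 0 => HahnSeries.single 1 1 * sbar S
  | (i + 1) => (cfB S i)⁻¹ - toL (polPart (cfB S i)⁻¹)

/-- `cfA S i` is the partial-quotient polynomial `a_{i+1}`. -/
noncomputable def cfA {F : Type*} [Field F] (S : ℕ → F) (i : ℕ) : Polynomial F :=
  polPart (cfB S i)⁻¹

/-- `cfQ S i = (q^{(i-1)}, q^{(i)})`, the consecutive partial quotients of `S̄`,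
with `q^{(-1)} = (0,1)`, `q^{(0)} = (1,0)`, `q^{(i+1)} = a_{i+1} q^{(i)} + q^{(i-1)}`. -/
noncomputable def cfQ {F : Type*} [Field F] (S : ℕ → F) :
    ℕ → (Polynomial F × Polynomial F) × (Polynomial F × Polynomial F)
  | 0 => ((0, 1), (1, 0))
  | (i + 1) => ((cfQ S i).2,
      (cfA S i * (cfQ S i).2.1 + (cfQ S i).1.1,
       cfA S i * (cfQ S i).2.2 + (cfQ S i).1.2))

/-- `vLE L m` : the exponential valuation of `L` (largest `x`-degree) is `≤ m`. -/
def vLE {F : Type*} [Field F] (L : LaurentSeries F) (m : ℤ) : Prop :=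
  ∀ i : ℤ, m < i → L.coeff (-i) = 0

/-- `IsPosPart L g` : `x·g = [L]`, the strictly-positive `x`-degree part of `L`. -/
def IsPosPart {F : Type*} [Field F] (L : LaurentSeries F) (g : Polynomial F) : Prop :=
  ∀ k : ℕ, g.coeff k = L.coeff (-(k + 1 : ℤ))
open Polynomial in
/-- φ of degree d satisfies the annihilating condition for the length-`n` sequence
`s₀, s₋₁, …, s₁₋ₙ` (where `s k` denotes `s₋ₖ`). -/
def AnnCond {D : Type*} [CommRing D] (n : ℕ) (s : ℕ → D) (φ : Polynomial D) : Prop :=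
  ∀ t : ℕ, t + φ.natDegree + 1 ≤ n →
    ∑ j ∈ Finset.range (φ.natDegree + 1), φ.coeff j * s (t + j) = 0

/-- φ is a nonzero annihilating polynomial of the length-`n` sequence `s`. -/
def Annihilates {D : Type*} [CommRing D] (n : ℕ) (s : ℕ → D) (φ : Polynomial D) : Prop :=
  φ ≠ 0 ∧ AnnCond n s φ

/-- Linear complexity: minimal degree of a nonzero annihilating polynomial. -/
noncomputable def LC {D : Type*} [CommRing D] (n : ℕ) (s : ℕ → D) : ℕ :=
  sInf {d | ∃ φ : Polynomial D, Annihilates n s φ ∧ φ.natDegree = d}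

/-- `x·ψ = [φ·s̄]`, the strictly-positive-degree part of `φ·s̄`, expressed coefficientwise. -/
def SeqNum {D : Type*} [CommRing D] (n : ℕ) (s : ℕ → D) (φ ψ : Polynomial D) : Prop :=
  ∀ k : ℕ, ψ.coeff k = ∑ j ∈ Finset.range (φ.natDegree + 1),
    if k + 1 ≤ j ∧ j - (k + 1) < n then φ.coeff j * s (j - (k + 1)) else 0

/-- `(φ, ψ)` is a solution for the length-`n` sequence `s`. -/
def IsSolution {D : Type*} [CommRing D] (n : ℕ) (s : ℕ → D) (φ ψ : Polynomial D) : Prop :=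
  Annihilates n s φ ∧ SeqNum n s φ ψ

/-- `φ` is a characteristic polynomial of the infinite sequence `S`:
`(φ·S̄)_i = 0` for all `i ≤ 0` (i.e. all coefficients at nonpositive `x`-degrees vanish). -/
def IsCharPoly {F : Type*} [Field F] (S : ℕ → F) (φ : Polynomial F) : Prop :=
  ∀ k : ℤ, 0 ≤ k → (toL φ * sbar S).coeff k = 0

open Polynomial HahnSeries Finset

namespace LRS

variable {F : Type*} [Field F]

lemma hahn_sum_coeff {α : Type*} (s : Finset α) (f : α → LaurentSeries F) (e : ℤ) :
    (∑ i ∈ s, f i).coeff e = ∑ i ∈ s, (f i).coeff e :=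
  map_sum (HahnSeries.coeff.addMonoidHom e) f s

lemma sbar_coeff_nat (S : ℕ → F) (k : ℕ) : (sbar S).coeff (k : ℤ) = S k := by
  rw [sbar, HahnSeries.ofPowerSeries_apply_coeff, PowerSeries.coeff_mk]

lemma sbar_coeff_neg (S : ℕ → F) {e : ℤ} (he : e < 0) : (sbar S).coeff e = 0 := by
  rw [sbar, HahnSeries.ofPowerSeries_apply]
  apply HahnSeries.embDomain_notin_range
  rintro ⟨m, hm⟩
  have : ((m : ℕ) : ℤ) = e := hm
  omega

lemma toL_coeff_neg (p : Polynomial F) (m : ℕ) : (toL p).coeff (-(m : ℤ)) = p.coeff m := by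
  rw [toL, hahn_sum_coeff]
  simp only [HahnSeries.coeff_single, neg_inj, Nat.cast_inj]
  rw [Finset.sum_ite_eq (Finset.range (p.natDegree + 1)) m (fun k => p.coeff k)]
  split_ifs with h
  · rfl
  · simp only [Finset.mem_range, not_lt] at h
    exact (Polynomial.coeff_eq_zero_of_natDegree_lt (by omega)).symm

lemma toL_coeff_pos (p : Polynomial F) {e : ℤ} (he : 0 < e) : (toL p).coeff e = 0 := by
  rw [toL, hahn_sum_coeff]
  apply Finset.sum_eq_zero
  intro k _
  rw [HahnSeries.coeff_single_of_ne (by omega)]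

lemma mul_sbar_coeff (p : Polynomial F) (S : ℕ → F) (e : ℤ) :
    (toL p * sbar S).coeff e =
      ∑ j ∈ Finset.range (p.natDegree + 1),
        if 0 ≤ e + j then p.coeff j * S (e + j).toNat else 0 := by
  rw [toL, Finset.sum_mul, hahn_sum_coeff]
  refine Finset.sum_congr rfl fun j _ => ?_
  have h1 : (HahnSeries.single (-(j : ℤ)) (p.coeff j) * sbar S).coeff e
      = p.coeff j * (sbar S).coeff (e + j) := by
    have := HahnSeries.coeff_single_mul_add (r := p.coeff j) (x := sbar S)
      (a := e + j) (b := -(j : ℤ))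
    rw [show e + (j:ℤ) + -(j:ℤ) = e by ring] at this
    exact this
  rw [h1]
  split_ifs with h
  · congr 1
    conv_lhs => rw [show e + (j:ℤ) = (((e + j).toNat : ℕ) : ℤ) by omega]
    exact sbar_coeff_nat _ _
  · rw [sbar_coeff_neg _ (by omega), mul_zero]

lemma mul_sbar_coeff_nat (p : Polynomial F) (S : ℕ → F) (t : ℕ) :
    (toL p * sbar S).coeff (t : ℤ)
      = ∑ j ∈ Finset.range (p.natDegree + 1), p.coeff j * S (t + j) := by
  rw [mul_sbar_coeff]
  refine Finset.sum_congr rfl fun j _ => ?_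
  rw [if_pos (by positivity), show ((t:ℤ) + j).toNat = t + j by omega]

lemma isCharPoly_iff (S : ℕ → F) (p : Polynomial F) :
    IsCharPoly S p ↔
      ∀ t : ℕ, ∑ j ∈ Finset.range (p.natDegree + 1), p.coeff j * S (t + j) = 0 := by
  constructor
  · intro h t
    rw [← mul_sbar_coeff_nat]
    exact h t (by positivity)
  · intro h k hk
    lift k to ℕ using hk
    rw [mul_sbar_coeff_nat]
    exact h k

lemma prop_rec (h : Polynomial F) (hm : h.Monic) (u : ℕ → F) (N : ℕ)
    (hrec : ∀ t, ∑ i ∈ Finset.range (h.natDegree + 1), h.coeff i * u (t + i) = 0)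
    (hbase : ∀ t < N, u t = 0) (hN : h.natDegree ≤ N) : ∀ t, u t = 0 := by
  intro t
  induction t using Nat.strong_induction_on with
  | _ t ih =>
    by_cases ht : t < N
    · exact hbase t ht
    · push_neg at ht
      have het : h.natDegree ≤ t := le_trans hN ht
      have h0 := hrec (t - h.natDegree)
      rw [Finset.sum_range_succ, show t - h.natDegree + h.natDegree = t by omega] at h0
      have hz : ∑ i ∈ Finset.range h.natDegree, h.coeff i * u (t - h.natDegree + i) = 0 := by
        apply Finset.sum_eq_zero
        intro i hi
        simp only [Finset.mem_range] at hi
        rw [ih (t - h.natDegree + i) (by omega), mul_zero]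
      rw [hz, zero_add, hm.coeff_natDegree, one_mul] at h0
      exact h0

lemma rec_comb (φ h : Polynomial F) (X : ℕ → F)
    (hX : ∀ t, ∑ i ∈ Finset.range (h.natDegree + 1), h.coeff i * X (t + i) = 0) (t : ℕ) :
    ∑ i ∈ Finset.range (h.natDegree + 1), h.coeff i *
      (∑ j ∈ Finset.range (φ.natDegree + 1), φ.coeff j * X (t + i + j)) = 0 := by
  calc ∑ i ∈ Finset.range (h.natDegree + 1), h.coeff i *
        (∑ j ∈ Finset.range (φ.natDegree + 1), φ.coeff j * X (t + i + j))
      = ∑ j ∈ Finset.range (φ.natDegree + 1), φ.coeff j *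
        (∑ i ∈ Finset.range (h.natDegree + 1), h.coeff i * X (t + j + i)) := by
        simp_rw [Finset.mul_sum]
        rw [Finset.sum_comm]
        refine Finset.sum_congr rfl fun j _ => Finset.sum_congr rfl fun i _ => ?_
        rw [show t + i + j = t + j + i by omega]
        ring
    _ = 0 := by simp_rw [hX]; simp

lemma annihilates_to_dvd (S : ℕ → F) (g₁ : Polynomial F) (hm : g₁.Monic)
    (hchar : ∀ t, ∑ i ∈ Finset.range (g₁.natDegree + 1), g₁.coeff i * S (t + i) = 0)
    (hId : ∀ φ : Polynomial F, IsCharPoly S φ ↔ g₁ ∣ φ)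
    (n : ℕ) (φ : Polynomial F) (hφ : AnnCond n S φ)
    (hdeg : g₁.natDegree + φ.natDegree ≤ n) : g₁ ∣ φ := by
  rw [← hId, isCharPoly_iff]
  exact prop_rec g₁ hm
    (fun t => ∑ j ∈ Finset.range (φ.natDegree + 1), φ.coeff j * S (t + j))
    g₁.natDegree (rec_comb φ g₁ S hchar) (fun t ht => hφ t (by omega)) le_rfl
  
end LRS

open Polynomial in
theorem linearRecurring_minimal_solution {F : Type*} [Field F] (S : ℕ → F)
    (g₁ g₂ : Polynomial F) (hmonic : g₁.Monic)
    (hId : ∀ φ : Polynomial F, IsCharPoly S φ ↔ g₁ ∣ φ)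
    (hg₂ : IsPosPart (toL g₁ * sbar S) g₂)
    (n : ℕ) (hn : 1 ≤ n) (h2d : 2 * g₁.natDegree ≤ n) :
    (IsSolution n S g₁ g₂ ∧ g₁.natDegree = LC n S) ∧
      (∀ f₁ f₂ : Polynomial F, IsSolution n S f₁ f₂ → f₁.natDegree = LC n S →
        ∃ c : F, c ≠ 0 ∧ f₁ = C c * g₁ ∧ f₂ = C c * g₂) ∧
      toL g₁ * sbar S = toL (X * g₂) ∧
      (∀ (T : ℕ → F) (h₁ : Polynomial F), h₁.Monic →
        (∀ φ : Polynomial F, IsCharPoly T φ ↔ h₁ ∣ φ) →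
        h₁.natDegree ≤ g₁.natDegree →
        (∀ k < 2 * g₁.natDegree, T k = S k) → ∀ k, T k = S k) := by
  have hcp : IsCharPoly S g₁ := (hId g₁).mpr dvd_rfl
  have hcharS : ∀ t : ℕ,
      ∑ j ∈ Finset.range (g₁.natDegree + 1), g₁.coeff j * S (t + j) = 0 :=
    (LRS.isCharPoly_iff S g₁).mp hcp
  -- (g₁, g₂) is a solution
  have hsol : IsSolution n S g₁ g₂ := by
    refine ⟨⟨hmonic.ne_zero, fun t _ => hcharS t⟩, fun k => ?_⟩
    rw [hg₂ k, LRS.mul_sbar_coeff]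
    refine Finset.sum_congr rfl fun j hj => ?_
    simp only [Finset.mem_range] at hj
    by_cases hkj : k + 1 ≤ j
    · rw [if_pos (by omega), if_pos ⟨hkj, by omega⟩]
      congr 2
      omega
    · rw [if_neg (by omega), if_neg (fun h => hkj h.1)]
  -- linear complexity
  have hLC : LC n S = g₁.natDegree := by
    have hmem : g₁.natDegree ∈
        {d | ∃ φ : Polynomial F, Annihilates n S φ ∧ φ.natDegree = d} :=
      ⟨g₁, hsol.1, rfl⟩
    refine le_antisymm (Nat.sInf_le hmem) (le_csInf ⟨_, hmem⟩ ?_)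
    rintro m ⟨φ, ⟨hφ0, hφann⟩, rfl⟩
    by_contra hlt
    push_neg at hlt
    have hdvd : g₁ ∣ φ :=
      LRS.annihilates_to_dvd S g₁ hmonic hcharS hId n φ hφann (by omega)
    exact absurd (Polynomial.natDegree_le_of_dvd hdvd hφ0) (by omega)
  refine ⟨⟨hsol, hLC.symm⟩, ?_, ?_, ?_⟩
  · -- uniqueness up to scalar
    rintro f₁ f₂ ⟨⟨hf0, hfann⟩, hfsn⟩ hfdeg
    have hfd : f₁.natDegree = g₁.natDegree := by rw [hfdeg, hLC]
    obtain ⟨q, hq⟩ : g₁ ∣ f₁ :=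
      LRS.annihilates_to_dvd S g₁ hmonic hcharS hId n f₁ hfann (by omega)
    have hq0 : q ≠ 0 := by rintro rfl; rw [mul_zero] at hq; exact hf0 hq
    have hdq : q.natDegree = 0 := by
      have := Polynomial.natDegree_mul hmonic.ne_zero hq0
      rw [← hq] at this
      omega
    obtain ⟨c, hqC⟩ : ∃ c, q = Polynomial.C c := ⟨q.coeff 0, Polynomial.eq_C_of_natDegree_eq_zero hdq⟩
    rw [hqC] at hq
    refine ⟨c, fun h => hq0 (by rw [hqC, h, map_zero]), by rw [hq, mul_comm], ?_⟩
    have hf₁c : ∀ j, f₁.coeff j = c * g₁.coeff j := by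
      intro j
      rw [hq, mul_comm g₁ (Polynomial.C c), Polynomial.coeff_C_mul]
    ext k
    rw [Polynomial.coeff_C_mul, hfsn k, hsol.2 k, hfd, Finset.mul_sum]
    refine Finset.sum_congr rfl fun j _ => ?_
    split_ifs with h
    · rw [hf₁c j]; ring
    · rw [mul_zero]
  · -- S̄ = x g₂ / g₁
    ext e
    rcases e with m | k
    · rw [show (Int.ofNat m) = ((m : ℕ) : ℤ) from rfl]
      rw [hcp m (by positivity)]
      cases m with
      | zero =>
        rw [show (((0 : ℕ) : ℤ)) = -((0 : ℕ) : ℤ) by simp, LRS.toL_coeff_neg]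
        simp [Polynomial.mul_coeff_zero]
      | succ m =>
        rw [LRS.toL_coeff_pos _ (by exact_mod_cast Nat.succ_pos m)]
    · rw [show (Int.negSucc k) = -(((k + 1 : ℕ)) : ℤ) by simp [Int.negSucc_eq], LRS.toL_coeff_neg]
      have := hg₂ k
      rw [show -(((k + 1 : ℕ)) : ℤ) = -((k : ℤ) + 1) by push_cast; ring, ← this,
        Polynomial.coeff_X_mul]
  · -- determination by the first 2d terms
    intro T h₁ hm₁ hIdT hdeg₁ hagree
    have hcharT : ∀ t : ℕ,
        ∑ i ∈ Finset.range (h₁.natDegree + 1), h₁.coeff i * T (t + i) = 0 :=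
      (LRS.isCharPoly_iff T h₁).mp ((hIdT h₁).mpr dvd_rfl)
    have hgT : ∀ t : ℕ,
        ∑ j ∈ Finset.range (g₁.natDegree + 1), g₁.coeff j * T (t + j) = 0 := by
      refine LRS.prop_rec h₁ hm₁
        (fun t => ∑ j ∈ Finset.range (g₁.natDegree + 1), g₁.coeff j * T (t + j))
        g₁.natDegree (LRS.rec_comb g₁ h₁ T hcharT) (fun t ht => ?_) hdeg₁
    -- base case
      show ∑ j ∈ Finset.range (g₁.natDegree + 1), g₁.coeff j * T (t + j) = 0
      have : ∀ j ∈ Finset.range (g₁.natDegree + 1),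
          g₁.coeff j * T (t + j) = g₁.coeff j * S (t + j) := by
        intro j hj
        simp only [Finset.mem_range] at hj
        rw [hagree (t + j) (by omega)]
      rw [Finset.sum_congr rfl this]
      exact hcharS t
    intro k
    have hv : ∀ k, T k - S k = 0 := by
      refine LRS.prop_rec g₁ hmonic (fun k => T k - S k) (2 * g₁.natDegree)
        (fun t => ?_) (fun t ht => by show T t - S t = 0; rw [hagree t ht, sub_self]) (by omega)
      show ∑ i ∈ Finset.range (g₁.natDegree + 1), g₁.coeff i * (T (t + i) - S (t + i)) = 0
      simp only [mul_sub, Finset.sum_sub_distrib, hgT t, hcharS t, sub_zero]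
    exact sub_eq_zero.mp (hv k)
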